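/- arXiv:1805.00840 — 3 statements merged into one kernel-verified Lean document; each statement's English description precedes it below -/
import Mathlib

section
/- Let G be a graph with a triangle uvw such that u and v have degree 2 in G. If M' is a uniquely restricted matching in G - {u,v}, then M' ∪ {uv} is a uniquely restricted matching in G. -/
open SimpleGraph

/-- A set of edges `M` is a matching in `G` if all its elements are edges of `G`
and distinct edges of `M` share no endpoint. -/
def IsMatchingSet {V : Type*} (G : SimpleGraph V) (M : Set (Sym2 V)) : Prop :=
  M ⊆ G.edgeSet ∧ M.Pairwise fun e f => ∀ v : V, v ∈ e → v ∉ f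

/-- The set of vertices covered by a set of edges. -/
def coveredVerts {V : Type*} (M : Set (Sym2 V)) : Set V := {v | ∃ e ∈ M, v ∈ e}

/-- A matching is uniquely restricted if no other matching covers the same vertex set. -/
def IsURMatching {V : Type*} (G : SimpleGraph V) (M : Set (Sym2 V)) : Prop :=
  IsMatchingSet G M ∧
    ∀ N : Set (Sym2 V), IsMatchingSet G N → coveredVerts N = coveredVerts M → N = M

/-- An `M`-alternating cycle: a cycle whose edges alternate (cyclically)
between `M` and the complement of `M`. -/
def IsAltCycle {V : Type*} (G : SimpleGraph V) (M : Set (Sym2 V)) {v : V}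
    (c : G.Walk v v) : Prop :=
  c.IsCycle ∧ List.Chain' (fun e f => (e ∈ M) ↔ ¬ (f ∈ M)) c.edges ∧
    ∀ e f : Sym2 V, c.edges.head? = some e → c.edges.getLast? = some f →
      ((f ∈ M) ↔ ¬ (e ∈ M))

/-- The graph obtained from `G` by deleting the vertices in `S`
(they remain as isolated vertices). -/
def delVerts {V : Type*} (G : SimpleGraph V) (S : Set V) : SimpleGraph V where
  Adj x y := G.Adj x y ∧ x ∉ S ∧ y ∉ S
  symm := ⟨by rintro x y ⟨h, hx, hy⟩; exact ⟨h.symm, hy, hx⟩⟩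
  loopless := ⟨by rintro x ⟨h, -, -⟩; exact G.irrefl h⟩

/-- The maximum size of a uniquely restricted matching in `G`. -/
noncomputable def nuUR {V : Type*} (G : SimpleGraph V) : ℕ :=
  sSup {k | ∃ M : Set (Sym2 V), IsURMatching G M ∧ M.ncard = k}

/-- The matching number of `G`. -/
noncomputable def nuM {V : Type*} (G : SimpleGraph V) : ℕ :=
  sSup {k | ∃ M : Set (Sym2 V), IsMatchingSet G M ∧ M.ncard = k}

/-- A bridge is good if it lies on a path between two vertices of degree at most 2. -/
def IsGoodBridge {V : Type*} [Fintype V] (G : SimpleGraph V) [DecidableRel G.Adj]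
    (e : Sym2 V) : Prop :=
  G.IsBridge e ∧ ∃ (x y : V) (p : G.Walk x y),
    p.IsPath ∧ G.degree x ≤ 2 ∧ G.degree y ≤ 2 ∧ e ∈ p.edges

/-- If `uvw` is a triangle in `G` with `u` and `v` of degree `2`, and `M'` is a
uniquely restricted matching in `G - {u,v}`, then `M' ∪ {uv}` is a uniquely
restricted matching in `G`. -/
theorem stmt9 {V : Type*} [Fintype V] (G : SimpleGraph V) [DecidableRel G.Adj]
    (u v w : V) (huv : G.Adj u v) (hvw : G.Adj v w) (huw : G.Adj u w)
    (hu : G.degree u = 2) (hv : G.degree v = 2)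
    (M' : Set (Sym2 V)) (hM' : IsURMatching (delVerts G {u, v}) M') :
    IsURMatching G (insert s(u, v) M') := by
  classical
  have hdelsub : (delVerts G {u, v}).edgeSet ⊆ G.edgeSet := by
    intro e
    induction e using Sym2.ind with
    | _ a b =>
      intro h
      rw [SimpleGraph.mem_edgeSet] at h ⊢
      exact h.1
  have huw' : u ≠ w := huw.ne
  have hvw' : v ≠ w := hvw.ne
  have huv' : u ≠ v := huv.ne
  obtain ⟨⟨hM'sub, hM'pw⟩, hM'ur⟩ := hM'
  -- edges of M' avoid u and v
  have havoid : ∀ e ∈ M', u ∉ e ∧ v ∉ e := by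
    intro e he
    induction e using Sym2.ind with
    | _ a b =>
      have h := hM'sub he
      rw [SimpleGraph.mem_edgeSet] at h
      obtain ⟨-, ha, hb⟩ := h
      simp only [Set.mem_insert_iff, Set.mem_singleton_iff, not_or] at ha hb
      constructor <;> intro hm <;> rcases Sym2.mem_iff.mp hm with rfl | rfl
      · exact ha.1 rfl
      · exact hb.1 rfl
      · exact ha.2 rfl
      · exact hb.2 rfl
  have hnbr : ∀ (x y z : V), G.Adj x y → G.Adj x z → y ≠ z → G.degree x = 2 →
      ∀ t, G.Adj x t → t = y ∨ t = z := by
    intro x y z hxy hxz hyz hdeg t ht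
    have hsub : ({y, z} : Finset V) ⊆ G.neighborFinset x := by
      intro s hs
      simp only [Finset.mem_insert, Finset.mem_singleton] at hs
      rcases hs with rfl | rfl <;> simp [SimpleGraph.mem_neighborFinset, hxy, hxz]
    have hcard : ({y, z} : Finset V).card = 2 := by
      rw [Finset.card_insert_of_notMem (by simp [hyz])]; simp
    have hle : (G.neighborFinset x).card ≤ ({y, z} : Finset V).card := by
      rw [hcard, SimpleGraph.card_neighborFinset_eq_degree, hdeg]
    have heq := Finset.eq_of_subset_of_card_le hsub hle
    have ht' : t ∈ G.neighborFinset x := by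
      simp [SimpleGraph.mem_neighborFinset, ht]
    rw [← heq] at ht'
    simpa using ht'
  have hedgeu : ∀ e ∈ G.edgeSet, u ∈ e → e = s(u, v) ∨ e = s(u, w) := by
    intro e he hue
    induction e using Sym2.ind with
    | _ a b =>
      rw [SimpleGraph.mem_edgeSet] at he
      rcases Sym2.mem_iff.mp hue with rfl | rfl
      · rcases hnbr u v w huv huw hvw' hu b he with rfl | rfl
        · exact Or.inl rfl
        · exact Or.inr rfl
      · rcases hnbr u v w huv huw hvw' hu a he.symm with rfl | rfl
        · exact Or.inl Sym2.eq_swap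
        · exact Or.inr Sym2.eq_swap
  have hedgev : ∀ e ∈ G.edgeSet, v ∈ e → e = s(u, v) ∨ e = s(v, w) := by
    intro e he hve
    induction e using Sym2.ind with
    | _ a b =>
      rw [SimpleGraph.mem_edgeSet] at he
      rcases Sym2.mem_iff.mp hve with rfl | rfl
      · rcases hnbr v u w huv.symm hvw huw' hv b he with rfl | rfl
        · exact Or.inl Sym2.eq_swap
        · exact Or.inr rfl
      · rcases hnbr v u w huv.symm hvw huw' hv a he.symm with rfl | rfl
        · exact Or.inl (by rw [Sym2.eq_swap])
        · exact Or.inr Sym2.eq_swap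
  constructor
  · constructor
    · intro e he
      rcases he with rfl | he
      · exact huv
      · exact hdelsub (hM'sub he)
    · have hsymm : Symmetric fun (e f : Sym2 V) => ∀ x : V, x ∈ e → x ∉ f := by
        intro e f h x hxf hxe
        exact h x hxe hxf
      rw [@Set.pairwise_insert_of_symm _ _ _ _ ⟨hsymm⟩]
      refine ⟨hM'pw, ?_⟩
      intro e he _ x hx
      rcases Sym2.mem_iff.mp hx with rfl | rfl
      · exact (havoid e he).1
      · exact (havoid e he).2
  · rintro N ⟨hNsub, hNpw⟩ hcov
    have hucov : u ∈ coveredVerts N := by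
      rw [hcov]
      exact ⟨s(u, v), Set.mem_insert _ _, Sym2.mem_mk_left _ _⟩
    have hvcov : v ∈ coveredVerts N := by
      rw [hcov]
      exact ⟨s(u, v), Set.mem_insert _ _, Sym2.mem_mk_right _ _⟩
    obtain ⟨e, heN, hue⟩ := hucov
    obtain ⟨f, hfN, hvf⟩ := hvcov
    have heuv : e = s(u, v) := by
      rcases hedgeu e (hNsub heN) hue with rfl | rfl
      · rfl
      · exfalso
        rcases hedgev f (hNsub hfN) hvf with rfl | rfl
        · have hne : s(u, w) ≠ s(u, v) := fun h => hvw' ((Sym2.congr_right.mp h).symm)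
          exact hNpw heN hfN hne u (Sym2.mem_mk_left _ _) (Sym2.mem_mk_left _ _)
        · have hne : s(u, w) ≠ s(v, w) := fun h => huv' (Sym2.congr_left.mp h)
          exact hNpw heN hfN hne w (Sym2.mem_mk_right _ _) (Sym2.mem_mk_right _ _)
    subst heuv
    have honly : ∀ g ∈ N, g ≠ s(u, v) → u ∉ g ∧ v ∉ g := by
      intro g hg hne
      constructor <;> intro hx
      · exact hNpw hg heN hne u hx (Sym2.mem_mk_left _ _)
      · exact hNpw hg heN hne v hx (Sym2.mem_mk_right _ _)
    set N' : Set (Sym2 V) := N \ {s(u, v)} with hN'def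
    have hN'match : IsMatchingSet (delVerts G {u, v}) N' := by
      constructor
      · rintro g ⟨hgN, hgne⟩
        have hne : g ≠ s(u, v) := hgne
        obtain ⟨hug, hvg⟩ := honly g hgN hne
        induction g using Sym2.ind with
        | _ a b =>
          have hadj : G.Adj a b := hNsub hgN
          refine ⟨hadj, ?_, ?_⟩ <;>
            simp only [Set.mem_insert_iff, Set.mem_singleton_iff, not_or] <;>
            constructor <;> rintro rfl
          · exact hug (Sym2.mem_mk_left _ _)
          · exact hvg (Sym2.mem_mk_left _ _)
          · exact hug (Sym2.mem_mk_right _ _)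
          · exact hvg (Sym2.mem_mk_right _ _)
      · exact hNpw.mono Set.diff_subset
    have hN'cov : coveredVerts N' = coveredVerts M' := by
      ext x
      constructor
      · rintro ⟨g, ⟨hgN, hgne⟩, hxg⟩
        have hne : g ≠ s(u, v) := hgne
        obtain ⟨hug, hvg⟩ := honly g hgN hne
        have hxu : x ≠ u := fun h => hug (h ▸ hxg)
        have hxv : x ≠ v := fun h => hvg (h ▸ hxg)
        have hxN : x ∈ coveredVerts N := ⟨g, hgN, hxg⟩
        rw [hcov] at hxN
        obtain ⟨g', hg', hxg'⟩ := hxN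
        rcases hg' with rfl | hg'
        · rcases Sym2.mem_iff.mp hxg' with rfl | rfl
          · exact absurd rfl hxu
          · exact absurd rfl hxv
        · exact ⟨g', hg', hxg'⟩
      · rintro ⟨g, hg, hxg⟩
        obtain ⟨hug, hvg⟩ := havoid g hg
        have hxu : x ≠ u := fun h => hug (h ▸ hxg)
        have hxv : x ≠ v := fun h => hvg (h ▸ hxg)
        have hxN : x ∈ coveredVerts N := by
          rw [hcov]
          exact ⟨g, Set.mem_insert_of_mem _ hg, hxg⟩
        obtain ⟨g', hg'N, hxg'⟩ := hxN
        have hne : g' ≠ s(u, v) := by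
          rintro rfl
          rcases Sym2.mem_iff.mp hxg' with rfl | rfl
          · exact hxu rfl
          · exact hxv rfl
        exact ⟨g', ⟨hg'N, hne⟩, hxg'⟩
    have hN'eq : N' = M' := hM'ur N' hN'match hN'cov
    have : insert s(u, v) N' = N := by
      rw [hN'def, Set.insert_diff_singleton, Set.insert_eq_self.mpr heN]
    rw [← this, hN'eq]
end

section
/- If G is a connected subcubic graph with minimum degree 2 and P = u_1 v_1 u_2 v_2 ... u_k v_k u_{k+1} is a path in G where each v_i has degree 2 in G, and M' is a uniquely restricted matching in G - V(P), then M' ∪ {u_1v_1, u_2v_2, ..., u_kv_k} is a uniquely restricted matching in G. -/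
open SimpleGraph

/-- If `G` is subcubic with minimum degree `2`, `P = u_1 v_1 ... u_k v_k u_{k+1}` is a
path whose internal vertices `v_i` all have degree `2` in `G`, and `M'` is a uniquely
restricted matching in `G - V(P)`, then `M' ∪ {u_1v_1, ..., u_kv_k}` is a uniquely
restricted matching in `G`. -/
theorem stmt11 {V : Type*} [Fintype V] (G : SimpleGraph V) [DecidableRel G.Adj]
    (hsub : ∀ x : V, G.degree x ≤ 3) (hmin : ∀ x : V, 2 ≤ G.degree x)
    (k : ℕ) (u : Fin (k + 1) → V) (w : Fin k → V)
    (hinj : Function.Injective (Sum.elim u w))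
    (hadj1 : ∀ i : Fin k, G.Adj (u i.castSucc) (w i))
    (hadj2 : ∀ i : Fin k, G.Adj (w i) (u i.succ))
    (hdeg : ∀ i : Fin k, G.degree (w i) = 2)
    (M' : Set (Sym2 V))
    (hM' : IsURMatching (delVerts G (Set.range u ∪ Set.range w)) M') :
    IsURMatching G (M' ∪ {e | ∃ i : Fin k, e = s(u i.castSucc, w i)}) := by
  classical
  set S : Set V := Set.range u ∪ Set.range w with hS
  set P : Set (Sym2 V) := {e | ∃ i : Fin k, e = s(u i.castSucc, w i)} with hPdef
  have hu : Function.Injective u := fun a b h =>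
    Sum.inl.inj (hinj (show Sum.elim u w (.inl a) = Sum.elim u w (.inl b) from h))
  have hwinj : Function.Injective w := fun a b h =>
    Sum.inr.inj (hinj (show Sum.elim u w (.inr a) = Sum.elim u w (.inr b) from h))
  have huw : ∀ a b, u a ≠ w b := fun a b h => by
    have := hinj (show Sum.elim u w (.inl a) = Sum.elim u w (.inr b) from h)
    simp at this
  -- edges of delVerts
  have hdel : ∀ e ∈ (delVerts G S).edgeSet, e ∈ G.edgeSet ∧ ∀ v ∈ e, v ∉ S := by
    intro e he
    induction e using Sym2.ind with
    | _ a b =>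
      obtain ⟨hab, ha, hb⟩ := he
      refine ⟨hab, ?_⟩
      intro v hv
      rcases Sym2.mem_iff.mp hv with rfl | rfl <;> assumption
  have hdel' : ∀ e ∈ G.edgeSet, (∀ v ∈ e, v ∉ S) → e ∈ (delVerts G S).edgeSet := by
    intro e he hv
    induction e using Sym2.ind with
    | _ a b =>
      exact ⟨he, hv a (by simp), hv b (by simp)⟩
  -- neighbors of w i
  have hnbr : ∀ (i : Fin k) (x : V), G.Adj (w i) x → x = u i.castSucc ∨ x = u i.succ := by
    intro i x hx
    have hne : u i.castSucc ≠ u i.succ := fun h =>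
      absurd (hu h) (Fin.castSucc_lt_succ : i.castSucc < i.succ).ne
    have hsub' : ({u i.castSucc, u i.succ} : Finset V) ⊆ G.neighborFinset (w i) := by
      intro y hy
      rcases Finset.mem_insert.mp hy with rfl | hy
      · exact (G.mem_neighborFinset _ _).mpr (hadj1 i).symm
      · rcases Finset.mem_singleton.mp hy with rfl
        exact (G.mem_neighborFinset _ _).mpr (hadj2 i)
    have hcard : ({u i.castSucc, u i.succ} : Finset V).card = 2 := Finset.card_pair hne
    have heq : ({u i.castSucc, u i.succ} : Finset V) = G.neighborFinset (w i) := by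
      refine Finset.eq_of_subset_of_card_le hsub' ?_
      rw [hcard, G.card_neighborFinset_eq_degree, hdeg i]
    have hx' : x ∈ G.neighborFinset (w i) := (G.mem_neighborFinset _ _).mpr hx
    rw [← heq] at hx'
    simpa using hx'
  have hM'del : M' ⊆ (delVerts G S).edgeSet := hM'.1.1
  have hcovM'S : ∀ v ∈ coveredVerts M', v ∉ S := by
    rintro v ⟨e, he, hv⟩
    exact (hdel e (hM'del he)).2 v hv
  have hPS : ∀ e ∈ P, ∀ v ∈ e, v ∈ S := by
    rintro e ⟨i, rfl⟩ v hv
    rcases Sym2.mem_iff.mp hv with rfl | rfl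
    · exact Or.inl ⟨i.castSucc, rfl⟩
    · exact Or.inr ⟨i, rfl⟩
  -- the union is a matching
  have hMset : IsMatchingSet G (M' ∪ P) := by
    constructor
    · rintro e (he | ⟨i, rfl⟩)
      · exact (hdel e (hM'del he)).1
      · exact hadj1 i
    · rintro e (he | ⟨i, rfl⟩) f (hf | ⟨j, rfl⟩) hef v hve hvf
      · exact hM'.1.2 he hf hef v hve hvf
      · exact (hdel e (hM'del he)).2 v hve (hPS _ ⟨j, rfl⟩ v hvf)
      · exact (hdel f (hM'del hf)).2 v hvf (hPS _ ⟨i, rfl⟩ v hve)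
      · have hij : i ≠ j := fun h => hef (by rw [h])
        rcases Sym2.mem_iff.mp hve with rfl | rfl <;>
          rcases Sym2.mem_iff.mp hvf with h | h
        · exact hij (Fin.castSucc_injective _ (hu h))
        · exact huw _ _ h
        · exact huw _ _ h.symm
        · exact hij (hwinj h)
  refine ⟨hMset, ?_⟩
  intro N hN hcov
  -- u (last) is not covered
  have hulast : u (Fin.last k) ∉ coveredVerts (M' ∪ P) := by
    rintro ⟨e, he, hm⟩
    rcases he with he | ⟨i, rfl⟩
    · exact (hdel e (hM'del he)).2 _ hm (Or.inl ⟨_, rfl⟩)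
    · rcases Sym2.mem_iff.mp hm with h | h
      · have := congrArg Fin.val (hu h)
        simp [Fin.val_last] at this
        omega
      · exact huw _ _ h
  -- the N-edge at w i has one of two forms
  have hform : ∀ i : Fin k, s(u i.castSucc, w i) ∈ N ∨ s(w i, u i.succ) ∈ N := by
    intro i
    have hwc : w i ∈ coveredVerts N := by
      rw [hcov]
      exact ⟨s(u i.castSucc, w i), Or.inr ⟨i, rfl⟩, by simp⟩
    obtain ⟨e, heN, hwe⟩ := hwc
    obtain ⟨x, rfl⟩ := Sym2.mem_iff_exists.mp hwe
    have hadj : G.Adj (w i) x := hN.1 heN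
    rcases hnbr i x hadj with rfl | rfl
    · left; rwa [Sym2.eq_swap] at heN
    · right; exact heN
  -- downward induction: all path edges are in N
  have hQaux : ∀ (d : ℕ) (i : Fin k), k - 1 - i.val = d → s(u i.castSucc, w i) ∈ N := by
    intro d
    induction d with
    | zero =>
      intro i hi
      rcases hform i with h | h
      · exact h
      · exfalso
        have hival : i.val = k - 1 := by have := i.isLt; omega
        have hlast : i.succ = Fin.last k := by
          apply Fin.ext
          simp [Fin.val_succ, Fin.val_last, hival]
          have := i.isLt; omega
        apply hulast
        rw [← hcov]
        exact ⟨s(w i, u i.succ), h, by rw [← hlast]; simp⟩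
    | succ d ih =>
      intro i hi
      rcases hform i with h | h
      · exact h
      · exfalso
        have hlt : i.val + 1 < k := by have := i.isLt; omega
        set j : Fin k := ⟨i.val + 1, hlt⟩ with hj
        have hjQ : s(u j.castSucc, w j) ∈ N := ih j (by show k - 1 - (i.val + 1) = d; omega)
        have hje : u i.succ = u j.castSucc :=
          congrArg u (Fin.ext (by simp [hj, Fin.val_succ]))
        have hneq : s(w i, u i.succ) ≠ s(u j.castSucc, w j) := by
          intro hEq
          rw [Sym2.eq_iff] at hEq
          rcases hEq with ⟨h1, _⟩ | ⟨h1, h2⟩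
          · exact huw _ _ h1.symm
          · have hij : i ≠ j := fun hh => by
              have := congrArg Fin.val hh; simp [hj] at this
            exact hij (hwinj h1)
        exact hN.2 h hjQ hneq (u i.succ) (by simp) (by rw [hje]; simp)
  have hPN : P ⊆ N := by rintro e ⟨i, rfl⟩; exact hQaux _ i rfl
  -- remaining edges form a matching of delVerts covering coveredVerts M'
  set R : Set (Sym2 V) := N \ P with hR
  have hRdel : ∀ e ∈ R, e ∈ (delVerts G S).edgeSet := by
    rintro e ⟨heN, heP⟩
    refine hdel' e (hN.1 heN) ?_
    intro v hv hvS
    have hvc : v ∈ coveredVerts (M' ∪ P) := by rw [← hcov]; exact ⟨e, heN, hv⟩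
    obtain ⟨e', he', hv'⟩ := hvc
    rcases he' with he' | he'
    · exact hcovM'S v ⟨e', he', hv'⟩ hvS
    · obtain ⟨i, rfl⟩ := he'
      have hpN : s(u i.castSucc, w i) ∈ N := hPN ⟨i, rfl⟩
      have hne : e ≠ s(u i.castSucc, w i) := fun h => heP (h ▸ ⟨i, rfl⟩)
      exact hN.2 heN hpN hne v hv hv'
  have hRmatch : IsMatchingSet (delVerts G S) R :=
    ⟨fun e he => hRdel e he, hN.2.mono Set.diff_subset⟩
  have hRcov : coveredVerts R = coveredVerts M' := by
    ext v
    constructor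
    · rintro ⟨e, heR, hv⟩
      have hvS : v ∉ S := (hdel e (hRdel e heR)).2 v hv
      have hvc : v ∈ coveredVerts (M' ∪ P) := by rw [← hcov]; exact ⟨e, heR.1, hv⟩
      obtain ⟨e', he', hv'⟩ := hvc
      rcases he' with he' | he'
      · exact ⟨e', he', hv'⟩
      · exact absurd (hPS e' he' v hv') hvS
    · rintro ⟨e, heM', hv⟩
      have hvS : v ∉ S := (hdel e (hM'del heM')).2 v hv
      have hvc : v ∈ coveredVerts N := by
        rw [hcov]; exact ⟨e, Or.inl heM', hv⟩
      obtain ⟨e', he', hv'⟩ := hvc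
      have he'P : e' ∉ P := fun h => hvS (hPS e' h v hv')
      exact ⟨e', ⟨he', he'P⟩, hv'⟩
  have hRM : R = M' := hM'.2 R hRmatch hRcov
  have : N = R ∪ P := by rw [hR, Set.diff_union_of_subset hPN]
  rw [this, hRM]
end

section
/- Let G be a subcubic graph with minimum degree 2 and girth at least 7, and let P = u_1 v_1 ... u_k v_k u_{k+1} be a path in G whose internal vertices v_1,...,v_k have degree 2 in G. Then the number c of components of G - V(P) that are trees satisfies c ≤ (k+3)/2. -/
open SimpleGraph

lemma reach_induce {V : Type*} {G : SimpleGraph V} {s : Set V} {a b : V} (p : G.Walk a b)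
    (hp : ∀ x ∈ p.support, x ∈ s) (ha : a ∈ s) (hb : b ∈ s) :
    (G.induce s).Reachable ⟨a, ha⟩ ⟨b, hb⟩ := by
  induction p with
  | nil => exact Reachable.refl _
  | @cons a c b h q ih =>
      have hc : c ∈ s := hp _ (by simp [Walk.support_cons])
      have hadj : (G.induce s).Adj ⟨a, ha⟩ ⟨c, hc⟩ := by
        simp [comap_adj, h]
      exact hadj.reachable.trans (ih (fun x hx => hp _ (by simp [Walk.support_cons, hx])) hc hb)

lemma comp_induce_connected {V : Type*} [DecidableEq V] {G : SimpleGraph V} (C : G.ConnectedComponent) :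
    (G.induce C.supp).Connected := by
  rw [connected_iff]
  constructor
  · rintro ⟨a, ha⟩ ⟨b, hb⟩
    rw [ConnectedComponent.mem_supp_iff] at ha hb
    have hr : G.Reachable a b := ConnectedComponent.exact (ha.trans hb.symm)
    obtain ⟨p⟩ := hr
    refine reach_induce p (fun x hx => ?_) _ _
    rw [ConnectedComponent.mem_supp_iff, ← ha]
    exact (ConnectedComponent.sound (p.takeUntil x hx).reachable).symm
  · obtain ⟨v, hv⟩ := C.exists_rep
    exact ⟨⟨v, by rw [ConnectedComponent.mem_supp_iff]; exact hv⟩⟩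

lemma tree_comp_two_edges {V : Type*} [Fintype V] (G : SimpleGraph V) [DecidableRel G.Adj] (S : Set V)
    [DecidablePred (· ∈ S)] [Fintype ↥Sᶜ]
    (hmin : ∀ x : V, 2 ≤ G.degree x)
    (C : (G.induce Sᶜ).ConnectedComponent) [Fintype ↥C.supp]
    (hC : ((G.induce Sᶜ).induce C.supp).IsAcyclic) :
    2 ≤ ∑ z : C.supp, ((G.neighborFinset ((z : ↥Sᶜ) : V)).filter (· ∈ S)).card := by
  classical
  set T := (G.induce Sᶜ).induce C.supp with hT
  have htree : T.IsTree := ⟨comp_induce_connected C, hC⟩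
  have hedge : T.edgeFinset.card + 1 = Fintype.card ↥C.supp := htree.card_edgeFinset
  have hhand : ∑ z : C.supp, T.degree z = 2 * T.edgeFinset.card :=
    T.sum_degrees_eq_twice_card_edges
  have hdeg : ∀ z : C.supp, G.degree ((z : ↥Sᶜ) : V)
      = ((G.neighborFinset ((z : ↥Sᶜ) : V)).filter (· ∈ S)).card + T.degree z := by
    intro z
    have hsplit := Finset.card_filter_add_card_filter_not
      (s := G.neighborFinset ((z : ↥Sᶜ) : V)) (p := (· ∈ S))
    rw [← G.card_neighborFinset_eq_degree, ← hsplit]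
    congr 1
    refine (Finset.card_bij (fun (y : ↥C.supp) _ => ((y : ↥Sᶜ) : V)) ?_ ?_ ?_).symm
    · intro y hy
      rw [mem_neighborFinset] at hy
      have hadj : G.Adj ((z : ↥Sᶜ) : V) ((y : ↥Sᶜ) : V) := hy
      simp only [Finset.mem_filter, mem_neighborFinset]
      exact ⟨hadj, (y : ↥Sᶜ).2⟩
    · intro y₁ _ y₂ _ h
      exact Subtype.ext (Subtype.ext h)
    · intro x hx
      simp only [Finset.mem_filter, mem_neighborFinset] at hx
      obtain ⟨hadj, hxS⟩ := hx
      have hadj' : (G.induce Sᶜ).Adj (z : ↥Sᶜ) ⟨x, hxS⟩ := hadj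
      have hx' : (⟨x, hxS⟩ : ↥Sᶜ) ∈ C.supp := by
        rw [ConnectedComponent.mem_supp_iff]
        have hz : (G.induce Sᶜ).connectedComponentMk (z : ↥Sᶜ) = C :=
          (ConnectedComponent.mem_supp_iff _ _).mp z.2
        rw [← hz]
        exact (ConnectedComponent.sound hadj'.reachable).symm
      refine ⟨⟨⟨x, hxS⟩, hx'⟩, ?_, rfl⟩
      rw [mem_neighborFinset]
      exact hadj
  have hsum : ∑ z : C.supp, G.degree ((z : ↥Sᶜ) : V)
      = (∑ z : C.supp, ((G.neighborFinset ((z : ↥Sᶜ) : V)).filter (· ∈ S)).card)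
        + 2 * T.edgeFinset.card := by
    rw [← hhand, ← Finset.sum_add_distrib]
    exact Finset.sum_congr rfl fun z _ => hdeg z
  have hlow : 2 * Fintype.card ↥C.supp ≤ ∑ z : C.supp, G.degree ((z : ↥Sᶜ) : V) := by
    calc 2 * Fintype.card ↥C.supp = ∑ _z : C.supp, 2 := by
            rw [Finset.sum_const, Finset.card_univ, smul_eq_mul, mul_comm]
      _ ≤ ∑ z : C.supp, G.degree ((z : ↥Sᶜ) : V) :=
            Finset.sum_le_sum (fun z _ => hmin _)
  have hpos : 0 < Fintype.card ↥C.supp := by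
    apply Fintype.card_pos_iff.mpr
    obtain ⟨v, hv⟩ := C.exists_rep
    exact ⟨⟨v, by rw [ConnectedComponent.mem_supp_iff]; exact hv⟩⟩
  omega


/-- If `G` is subcubic with minimum degree `2` and girth at least `7`, and
`P = u_1 v_1 ... u_k v_k u_{k+1}` is a path whose internal vertices `v_i` have degree
`2` in `G`, then the number `c` of tree components of `G - V(P)` satisfies
`c ≤ (k+3)/2`. -/
theorem stmt16 {V : Type*} [Fintype V] (G : SimpleGraph V) [DecidableRel G.Adj]
    (hsub : ∀ x : V, G.degree x ≤ 3) (hmin : ∀ x : V, 2 ≤ G.degree x)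
    (hg : 7 ≤ G.egirth)
    (k : ℕ) (u : Fin (k + 1) → V) (w : Fin k → V)
    (hinj : Function.Injective (Sum.elim u w))
    (hadj1 : ∀ i : Fin k, G.Adj (u i.castSucc) (w i))
    (hadj2 : ∀ i : Fin k, G.Adj (w i) (u i.succ))
    (hdeg : ∀ i : Fin k, G.degree (w i) = 2) :
    2 * {C : (G.induce (Set.range u ∪ Set.range w)ᶜ).ConnectedComponent |
          ((G.induce (Set.range u ∪ Set.range w)ᶜ).induce C.supp).IsAcyclic}.ncard ≤
      k + 3 := by
  classical
  set S : Set V := Set.range u ∪ Set.range w with hS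
  have huinj : Function.Injective u := fun a b h => by
    have := hinj (a₁ := Sum.inl a) (a₂ := Sum.inl b) (by simpa using h)
    simpa using this
  have hwinj : Function.Injective w := fun a b h => by
    have := hinj (a₁ := Sum.inr a) (a₂ := Sum.inr b) (by simpa using h)
    simpa using this
  have huw : ∀ a b, u a ≠ w b := fun a b h => by
    have := hinj (a₁ := Sum.inl a) (a₂ := Sum.inr b) (by simpa using h)
    simp at this
  set F : V → V → ℕ := fun x y => if G.Adj x y ∧ x ∈ S ∧ y ∉ S then 1 else 0 with hF
  have upper : ∑ x : V, ∑ y : V, F x y ≤ k + 3 := by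
      have hout0 : ∀ x : V, x ∉ S → ∑ y : V, F x y = 0 := by
        intro x hx
        refine Finset.sum_eq_zero fun y _ => ?_
        simp only [hF]
        exact if_neg (fun h : G.Adj x y ∧ x ∈ S ∧ y ∉ S => hx h.2.1)
      have houtw : ∀ i : Fin k, ∑ y : V, F (w i) y = 0 := by
        intro i
        have hne : u i.castSucc ≠ u i.succ :=
          fun h => (ne_of_lt (Fin.castSucc_lt_succ (i := i))) (huinj h)
        have hpair : ({u i.castSucc, u i.succ} : Finset V) ⊆ G.neighborFinset (w i) := by
          intro y hy
          rw [mem_neighborFinset]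
          rcases Finset.mem_insert.mp hy with h | h
          · rw [h]; exact (hadj1 i).symm
          · rw [Finset.mem_singleton.mp h]; exact hadj2 i
        have hcard : (G.neighborFinset (w i)).card ≤ ({u i.castSucc, u i.succ} : Finset V).card := by
          rw [G.card_neighborFinset_eq_degree, hdeg i, Finset.card_pair hne]
        have heq := Finset.eq_of_subset_of_card_le hpair hcard
        refine Finset.sum_eq_zero fun y _ => ?_
        simp only [hF]
        refine if_neg ?_
        rintro ⟨hadj, -, hyS⟩
        have hy : y ∈ ({u i.castSucc, u i.succ} : Finset V) := by
          rw [heq, mem_neighborFinset]; exact hadj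
        apply hyS
        rw [hS]
        rcases Finset.mem_insert.mp hy with h | h
        · exact Or.inl ⟨_, h.symm⟩
        · exact Or.inl ⟨_, (Finset.mem_singleton.mp h).symm⟩
      set e : Fin (k+1) → ℕ :=
        fun j => (if 0 < (j:ℕ) then 1 else 0) + (if (j:ℕ) < k then 1 else 0) with he
      have houtu : ∀ j, (∑ y : V, F (u j) y) + e j ≤ 3 := by
        intro j
        have hcard1 : ∑ y : V, F (u j) y
            ≤ ((G.neighborFinset (u j)).filter (fun y => y ∉ S)).card := by
          simp only [hF]
          rw [← Finset.card_filter]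
          refine Finset.card_le_card ?_
          intro y hy
          simp only [Finset.mem_filter, mem_neighborFinset, Finset.mem_univ, true_and] at hy ⊢
          exact ⟨hy.1, hy.2.2⟩
        have hnext : ∀ (h2 : (j:ℕ) < k),
            w ⟨(j:ℕ), h2⟩ ∈ (G.neighborFinset (u j)).filter (fun y => y ∈ S) := by
          intro h2
          simp only [Finset.mem_filter, mem_neighborFinset]
          refine ⟨?_, by exact Or.inr ⟨_, rfl⟩⟩
          have hj : (⟨(j:ℕ), h2⟩ : Fin k).castSucc = j := Fin.ext (by simp)
          have h := hadj1 (⟨(j:ℕ), h2⟩ : Fin k)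
          rwa [hj] at h
        have hprev : ∀ (h1 : 0 < (j:ℕ)),
            w ⟨(j:ℕ)-1, by omega⟩ ∈ (G.neighborFinset (u j)).filter (fun y => y ∈ S) := by
          intro h1
          simp only [Finset.mem_filter, mem_neighborFinset]
          refine ⟨?_, by exact Or.inr ⟨_, rfl⟩⟩
          have hj : (⟨(j:ℕ)-1, by omega⟩ : Fin k).succ = j := Fin.ext (by simp; omega)
          have h := (hadj2 (⟨(j:ℕ)-1, by omega⟩ : Fin k)).symm
          have hu : u (⟨(j:ℕ)-1, by omega⟩ : Fin k).succ = u j := congrArg u hj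
          rwa [hu] at h
        have hcard2 : e j ≤ ((G.neighborFinset (u j)).filter (fun y => y ∈ S)).card := by
          by_cases h1 : 0 < (j:ℕ) <;> by_cases h2 : (j:ℕ) < k <;>
            simp only [he, h1, h2, if_pos, if_neg, if_true, if_false]
          · have hsub2 : ({w ⟨(j:ℕ)-1, by omega⟩, w ⟨(j:ℕ), h2⟩} : Finset V)
                ⊆ (G.neighborFinset (u j)).filter (fun y => y ∈ S) := by
              intro y hy
              rcases Finset.mem_insert.mp hy with h | h
              · rw [h]; exact hprev h1
              · rw [Finset.mem_singleton.mp h]; exact hnext h2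
            have hne2 : w ⟨(j:ℕ)-1, by omega⟩ ≠ w ⟨(j:ℕ), h2⟩ := by
              intro h
              have := hwinj h
              have := congrArg Fin.val this
              simp at this
              omega
            calc (1+1 : ℕ) = ({w ⟨(j:ℕ)-1, by omega⟩, w ⟨(j:ℕ), h2⟩} : Finset V).card :=
                  (Finset.card_pair hne2).symm
              _ ≤ _ := Finset.card_le_card hsub2
          · simpa using Finset.card_pos.mpr ⟨_, hprev h1⟩
          · simpa using Finset.card_pos.mpr ⟨_, hnext h2⟩
          · simp
        have hsplit := Finset.card_filter_add_card_filter_not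
          (s := G.neighborFinset (u j)) (p := fun y => y ∈ S)
        have hdeg3 : (G.neighborFinset (u j)).card ≤ 3 := by
          rw [G.card_neighborFinset_eq_degree]; exact hsub _
        omega
      have hesum : ∑ j : Fin (k+1), e j = 2 * k := by
        have h1 : ∑ j : Fin (k+1), (if 0 < (j:ℕ) then 1 else 0) = k := by
          rw [Fin.sum_univ_eq_sum_range (fun i => if 0 < i then 1 else 0) (k+1),
            Finset.sum_range_succ']
          simp
        have h2 : ∑ j : Fin (k+1), (if (j:ℕ) < k then 1 else 0) = k := by
          rw [Fin.sum_univ_eq_sum_range (fun i => if i < k then 1 else 0) (k+1),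
            Finset.sum_range_succ]
          rw [Finset.sum_congr rfl (fun i hi => if_pos (Finset.mem_range.mp hi))]
          simp
        rw [he, Finset.sum_add_distrib, h1, h2]; omega
      -- restrict the sum to S
      have hSfin : S.toFinset = (Finset.univ.image u) ∪ (Finset.univ.image w) := by
        ext x
        simp [hS, Set.mem_toFinset, Finset.mem_image, eq_comm]
      have hdisj : Disjoint (Finset.univ.image u) (Finset.univ.image w) := by
        rw [Finset.disjoint_left]
        rintro x hx hx'
        obtain ⟨a, -, rfl⟩ := Finset.mem_image.mp hx
        obtain ⟨b, -, hb⟩ := Finset.mem_image.mp hx'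
        exact huw a b hb.symm
      have hrestrict : ∑ x : V, ∑ y : V, F x y = ∑ x ∈ S.toFinset, ∑ y : V, F x y := by
        refine (Finset.sum_subset (Finset.subset_univ _) ?_).symm
        intro x _ hx
        exact hout0 x (by simpa [Set.mem_toFinset] using hx)
      rw [hrestrict, hSfin, Finset.sum_union hdisj,
        Finset.sum_image (fun a _ b _ h => huinj h),
        Finset.sum_image (fun a _ b _ h => hwinj h)]
      have hw0 : ∑ i : Fin k, ∑ y : V, F (w i) y = 0 :=
        Finset.sum_eq_zero fun i _ => houtw i
      have hu3 : (∑ j : Fin (k+1), ∑ y : V, F (u j) y) + 2 * k ≤ 3 * (k+1) := by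
        rw [← hesum, ← Finset.sum_add_distrib]
        calc ∑ j : Fin (k+1), ((∑ y : V, F (u j) y) + e j)
            ≤ ∑ _j : Fin (k+1), 3 := Finset.sum_le_sum (fun j _ => houtu j)
          _ = 3 * (k+1) := by simp [mul_comm]
      omega
  have lower : 2 * {C : (G.induce Sᶜ).ConnectedComponent |
          ((G.induce Sᶜ).induce C.supp).IsAcyclic}.ncard ≤ ∑ y : V, ∑ x : V, F x y := by
      set A : Set (G.induce Sᶜ).ConnectedComponent :=
        {C | ((G.induce Sᶜ).induce C.supp).IsAcyclic} with hA
      letI : Fintype (G.induce Sᶜ).ConnectedComponent := Fintype.ofFinite _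
      have hins : ∀ y : V, y ∉ S →
          (∑ x : V, F x y) = ((G.neighborFinset y).filter (fun x => x ∈ S)).card := by
        intro y hy
        simp only [hF]
        rw [← Finset.card_filter]
        congr 1
        ext x
        simp only [Finset.mem_filter, mem_neighborFinset, Finset.mem_univ, true_and]
        constructor
        · rintro ⟨hadj, hxS, -⟩; exact ⟨hadj.symm, hxS⟩
        · rintro ⟨hadj, hxS⟩; exact ⟨hadj.symm, hxS, hy⟩
      have h1 : ∑ y : V, ∑ x : V, F x y = ∑ y ∈ Sᶜ.toFinset, ∑ x : V, F x y := by
        refine (Finset.sum_subset (Finset.subset_univ _) ?_).symm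
        intro y _ hy
        have hyS : y ∈ S := by
          by_contra hc
          exact hy (by simpa [Set.mem_toFinset] using hc)
        refine Finset.sum_eq_zero fun x _ => ?_
        simp only [hF]
        exact if_neg (fun h : G.Adj x y ∧ x ∈ S ∧ y ∉ S => h.2.2 hyS)
      have h2 : ∑ y ∈ Sᶜ.toFinset, ∑ x : V, F x y = ∑ z : ↥Sᶜ, ∑ x : V, F x ↑z :=
        Finset.sum_subtype _ (fun y => Set.mem_toFinset) _
      have h3 : ∑ z : ↥Sᶜ, ∑ x : V, F x ↑z
          = ∑ C : (G.induce Sᶜ).ConnectedComponent,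
              ∑ z ∈ Finset.univ.filter
                (fun z => (G.induce Sᶜ).connectedComponentMk z = C), ∑ x : V, F x ↑z :=
        (Finset.sum_fiberwise Finset.univ _ _).symm
      have h4 : ∀ C : (G.induce Sᶜ).ConnectedComponent,
          ∑ z ∈ Finset.univ.filter
            (fun z => (G.induce Sᶜ).connectedComponentMk z = C), ∑ x : V, F x ↑z
          = ∑ z : C.supp, ∑ x : V, F x ((z : ↥Sᶜ) : V) := by
        intro C
        refine Finset.sum_subtype _ (fun z => ?_) _
        simp [ConnectedComponent.mem_supp_iff]
      have h5 : ∀ C ∈ A.toFinset, 2 ≤ ∑ z : C.supp, ∑ x : V, F x ((z : ↥Sᶜ) : V) := by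
        intro C hC
        have hCa : ((G.induce Sᶜ).induce C.supp).IsAcyclic := by
          rw [Set.mem_toFinset] at hC; exact hC
        have := tree_comp_two_edges G S hmin C hCa
        refine this.trans (le_of_eq ?_)
        refine Finset.sum_congr rfl fun z _ => ?_
        exact (hins _ (z : ↥Sᶜ).2).symm
      have h6 : ∑ C ∈ A.toFinset, (2:ℕ)
          ≤ ∑ C : (G.induce Sᶜ).ConnectedComponent,
              ∑ z : C.supp, ∑ x : V, F x ((z : ↥Sᶜ) : V) := by
        calc ∑ C ∈ A.toFinset, (2:ℕ)
            ≤ ∑ C ∈ A.toFinset, ∑ z : C.supp, ∑ x : V, F x ((z : ↥Sᶜ) : V) :=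
              Finset.sum_le_sum h5
          _ ≤ _ := Finset.sum_le_sum_of_subset (Finset.subset_univ _)
      have hcard : A.ncard = A.toFinset.card := Set.ncard_eq_toFinset_card' A
      calc 2 * A.ncard = ∑ _C ∈ A.toFinset, (2:ℕ) := by
            rw [Finset.sum_const, hcard, smul_eq_mul, mul_comm]
        _ ≤ ∑ C : (G.induce Sᶜ).ConnectedComponent,
              ∑ z : C.supp, ∑ x : V, F x ((z : ↥Sᶜ) : V) := h6
        _ = ∑ y : V, ∑ x : V, F x y := by
            rw [h1, h2, h3]
            exact Finset.sum_congr rfl fun C _ => (h4 C).symm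
  calc 2 * {C : (G.induce Sᶜ).ConnectedComponent |
          ((G.induce Sᶜ).induce C.supp).IsAcyclic}.ncard
      ≤ ∑ y : V, ∑ x : V, F x y := lower
    _ = ∑ x : V, ∑ y : V, F x y := (Finset.sum_comm)
    _ ≤ k + 3 := upper
end
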